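/- Let δ ∈ (0,1/2), let G=(V,E) be a connected finite simple graph on k ≥ 2 vertices with a fixed total order on E, let T ⊆ E be a spanning tree with broken edge set E_T, and set f(x) := ∏_{uv∈T} 1[x_u+x_v>1] · ∏_{st∈E_T} 1[x_s+x_t≤1] and J := [1/2−δ, 1/2+δ]. For S ⊆ V let P_S := {x ∈ J^V : x_u ≤ 1/2 for all u ∈ S and x_u ≥ 1/2 for all u ∉ S}. Call S nice if S is an independent set in the graph (V,T) and V∖S is an independent set in the graph (V,E_T). Then ∫_{[0,1/2+δ]^V} f dμ = Σ over nice subsets S ⊆ V of ∫_{P_S} f dμ. -/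

import Mathlib

open MeasureTheory

attribute [local instance] Classical.propDecidable

namespace VolumePaper

variable {V : Type} [Fintype V]

/-- The set of endpoints of a finite set of (potential) edges. -/
noncomputable def verts (T : Finset (Sym2 V)) : Finset V :=
  Finset.univ.filter (fun v => ∃ e ∈ T, v ∈ e)

/-- `T` forms a tree (necessarily with at least one edge): the graph on the set of
endpoints of `T` whose edges are the members of `T` is a tree. -/
def IsTreeSet (T : Finset (Sym2 V)) : Prop :=
  (SimpleGraph.induce (↑(verts T) : Set V)
    (SimpleGraph.fromEdgeSet (↑T : Set (Sym2 V)))).IsTree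

/-- The broken edges of `T` relative to the induced subgraph `G[S]` and a fixed
total edge order (given by an injective function `ord` into `ℕ`): edges `e` of `G[S]`
not in `T` such that `e` is the largest edge of a (the) cycle of `T ∪ {e}`. -/
noncomputable def brokenEdgesOn (G : SimpleGraph V) (ord : Sym2 V → ℕ) (S : Finset V)
    (T : Finset (Sym2 V)) : Finset (Sym2 V) :=
  Finset.univ.filter (fun e =>
    e ∈ G.edgeSet ∧ (∀ v ∈ e, v ∈ S) ∧ e ∉ T ∧
    ∃ (u : V) (c : (SimpleGraph.fromEdgeSet (insert e (↑T : Set (Sym2 V)))).Walk u u),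
      c.IsCycle ∧ e ∈ c.edges ∧ ∀ e' ∈ c.edges, ord e' ≤ ord e)

/-- The broken edges of a tree `T`, relative to the graph induced by `G` on the
endpoints of `T`. -/
noncomputable def brokenEdges (G : SimpleGraph V) (ord : Sym2 V → ℕ)
    (T : Finset (Sym2 V)) : Finset (Sym2 V) :=
  brokenEdgesOn G ord (verts T) T

/-- Indicator (as a real number) of the event `x_u + x_v > 1` on an unordered pair. -/
noncomputable def indGt (x : V → ℝ) : Sym2 V → ℝ :=
  Sym2.lift ⟨fun u v => if 1 < x u + x v then 1 else 0, by intro a b; dsimp only; rw [add_comm]⟩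

/-- Indicator (as a real number) of the event `x_u + x_v ≤ 1` on an unordered pair. -/
noncomputable def indLe (x : V → ℝ) : Sym2 V → ℝ :=
  Sym2.lift ⟨fun u v => if x u + x v ≤ 1 then 1 else 0, by intro a b; dsimp only; rw [add_comm]⟩

/-- Extension of a function on a finite subset of coordinates by `0`. -/
noncomputable def extFun (S : Finset V) (x : {v // v ∈ S} → ℝ) : V → ℝ :=
  fun v => if h : v ∈ S then x ⟨v, h⟩ else 0

/-- The integral `∫_{[0,1/2+δ]^S} ∏_{uv ∈ T} 1[x_u+x_v>1] ∏_{st ∈ E_T} 1[x_s+x_t ≤ 1] dμ`,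
where `E_T` is the set of broken edges of `T` relative to `G[S]`. -/
noncomputable def treeIntegral (G : SimpleGraph V) (ord : Sym2 V → ℕ) (δ : ℝ)
    (S : Finset V) (T : Finset (Sym2 V)) : ℝ :=
  ∫ x : {v // v ∈ S} → ℝ in Set.univ.pi (fun _ => Set.Icc (0:ℝ) (1/2 + δ)),
    (∏ e ∈ T, indGt (extFun S x) e) * ∏ e ∈ brokenEdgesOn G ord S T, indLe (extFun S x) e

/-- The weight `w_T` of a tree `T` of edges of `G`. -/
noncomputable def treeWeight (G : SimpleGraph V) (ord : Sym2 V → ℕ) (δ : ℝ)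
    (T : Finset (Sym2 V)) : ℝ :=
  (1/2 + δ) ^ (-((verts T).card : ℤ)) * (-1 : ℝ) ^ T.card *
    treeIntegral G ord δ (verts T) T

/-- The connected components (each having at least one edge) of a set `F` of edges. -/
noncomputable def comps (F : Finset (Sym2 V)) : Finset (Finset (Sym2 V)) :=
  F.image (fun e => F.filter (fun e' => ∃ u ∈ e, ∃ v ∈ e',
    (SimpleGraph.fromEdgeSet (↑F : Set (Sym2 V))).Reachable u v))

/-- `F` is a forest of edges of `G` all of whose endpoints lie in `S`. -/
def IsForestOn (G : SimpleGraph V) (S : Finset V) (F : Finset (Sym2 V)) : Prop :=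
  (↑F : Set (Sym2 V)) ⊆ G.edgeSet ∧ (∀ e ∈ F, ∀ v ∈ e, v ∈ S) ∧
    (SimpleGraph.fromEdgeSet (↑F : Set (Sym2 V))).IsAcyclic

/-- The polynomial `p_{G[S],δ}(x) = ∑_{F forest of G[S]} (∏_{T comp. of F} w_T) x^{|F|}`
(with weights computed in `G`). -/
noncomputable def pPolyOn (G : SimpleGraph V) (ord : Sym2 V → ℕ) (δ : ℝ) (S : Finset V) :
    Polynomial ℂ :=
  ∑ F ∈ Finset.univ.filter (fun F => IsForestOn G S F),
    Polynomial.monomial F.card (((∏ T ∈ comps F, treeWeight G ord δ T : ℝ)) : ℂ)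

/-- The polynomial `p_{G,δ}`. -/
noncomputable def pPoly (G : SimpleGraph V) (ord : Sym2 V → ℕ) (δ : ℝ) : Polynomial ℂ :=
  pPolyOn G ord δ Finset.univ

/-- `T` is (the edge set of) a spanning tree of the induced subgraph `G[S]`. -/
def IsSpanningTreeOn (G : SimpleGraph V) (S : Finset V) (T : Finset (Sym2 V)) : Prop :=
  (↑T : Set (Sym2 V)) ⊆ G.edgeSet ∧ (∀ e ∈ T, ∀ v ∈ e, v ∈ S) ∧
    (SimpleGraph.induce (↑S : Set V)
      (SimpleGraph.fromEdgeSet (↑T : Set (Sym2 V)))).IsTree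

/-- The weight `w(G[S])` of the subgraph of `G` induced by `S`. -/
noncomputable def indWeight (G : SimpleGraph V) (ord : Sym2 V → ℕ) (δ : ℝ)
    (S : Finset V) : ℝ :=
  ∑ T ∈ Finset.univ.filter (fun T => IsSpanningTreeOn G S T),
    (1/2 + δ) ^ (-(S.card : ℤ)) * (-1 : ℝ) ^ T.card * treeIntegral G ord δ S T

/-- `G` has maximum degree at most `Δ`. -/
def maxDegreeLE (G : SimpleGraph V) (Δ : ℝ) : Prop :=
  ∀ v : V, ((Finset.univ.filter (fun u => G.Adj v u)).card : ℝ) ≤ Δ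

/-- The truncated relaxed independent set polytope `P_{G,δ}`. -/
def polytope (G : SimpleGraph V) (δ : ℝ) : Set (V → ℝ) :=
  {x | (∀ v, x v ∈ Set.Icc (0:ℝ) (1/2 + δ)) ∧ ∀ ⦃u v⦄, G.Adj u v → x u + x v ≤ 1}



section Statement14Aux

variable {V : Type} [Fintype V]

lemma indGt_mk' (x : V → ℝ) (u v : V) :
    indGt x s(u, v) = if 1 < x u + x v then 1 else 0 := rfl

lemma indLe_mk' (x : V → ℝ) (u v : V) :
    indLe x s(u, v) = if x u + x v ≤ 1 then 1 else 0 := rfl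

lemma measurable_indGt (e : Sym2 V) : Measurable (fun x : V → ℝ => indGt x e) := by
  induction e using Sym2.ind with
  | _ u v =>
    simp only [indGt_mk']
    exact Measurable.ite
      (measurableSet_lt measurable_const ((measurable_pi_apply u).add (measurable_pi_apply v)))
      measurable_const measurable_const

lemma measurable_indLe (e : Sym2 V) : Measurable (fun x : V → ℝ => indLe x e) := by
  induction e using Sym2.ind with
  | _ u v =>
    simp only [indLe_mk']
    exact Measurable.ite
      (measurableSet_le ((measurable_pi_apply u).add (measurable_pi_apply v)) measurable_const)
      measurable_const measurable_const

lemma indGt_mem (x : V → ℝ) (e : Sym2 V) : indGt x e ∈ Set.Icc (0:ℝ) 1 := by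
  induction e using Sym2.ind with
  | _ u v => rw [indGt_mk']; split_ifs <;> norm_num

lemma indLe_mem (x : V → ℝ) (e : Sym2 V) : indLe x e ∈ Set.Icc (0:ℝ) 1 := by
  induction e using Sym2.ind with
  | _ u v => rw [indLe_mk']; split_ifs <;> norm_num

lemma key14 (δ : ℝ) (hδ0 : 0 < δ) (hδ2 : δ < 1/2)
    (T B : Finset (Sym2 V)) (hspan : ∀ v : V, ∃ e ∈ T, v ∈ e) :
    (∫ x : V → ℝ in Set.univ.pi (fun _ => Set.Icc (0:ℝ) (1/2 + δ)),
        (∏ e ∈ T, indGt x e) * ∏ e ∈ B, indLe x e)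
    = ∑ S ∈ Finset.univ.filter (fun S : Finset V =>
          (∀ e ∈ T, ∃ u ∈ e, u ∉ S) ∧
          (∀ e ∈ B, ∃ u ∈ e, u ∈ S)),
        ∫ x : V → ℝ in {y : V → ℝ | (∀ v, y v ∈ Set.Icc (1/2 - δ) (1/2 + δ)) ∧
            (∀ u ∈ S, y u ≤ 1/2) ∧ (∀ u ∉ S, 1/2 ≤ y u)},
          (∏ e ∈ T, indGt x e) * ∏ e ∈ B, indLe x e := by
  classical
  set f : (V → ℝ) → ℝ := fun x => (∏ e ∈ T, indGt x e) * ∏ e ∈ B, indLe x e with hf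
  set box : Set (V → ℝ) := Set.univ.pi (fun _ => Set.Icc (0:ℝ) (1/2 + δ)) with hbox
  set P : Finset V → Set (V → ℝ) := fun S =>
    {y : V → ℝ | (∀ v, y v ∈ Set.Icc (1/2 - δ) (1/2 + δ)) ∧
      (∀ u ∈ S, y u ≤ 1/2) ∧ (∀ u ∉ S, 1/2 ≤ y u)} with hP
  set nice : Finset (Finset V) := Finset.univ.filter (fun S : Finset V =>
      (∀ e ∈ T, ∃ u ∈ e, u ∉ S) ∧ (∀ e ∈ B, ∃ u ∈ e, u ∈ S)) with hnice
  -- basic facts about f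
  have hfmem : ∀ x, f x ∈ Set.Icc (0:ℝ) 1 := by
    intro x
    have h1 : (∏ e ∈ T, indGt x e) ∈ Set.Icc (0:ℝ) 1 :=
      ⟨Finset.prod_nonneg fun e _ => (indGt_mem x e).1,
       Finset.prod_le_one (fun e _ => (indGt_mem x e).1) (fun e _ => (indGt_mem x e).2)⟩
    have h2 : (∏ e ∈ B, indLe x e) ∈ Set.Icc (0:ℝ) 1 :=
      ⟨Finset.prod_nonneg fun e _ => (indLe_mem x e).1,
       Finset.prod_le_one (fun e _ => (indLe_mem x e).1) (fun e _ => (indLe_mem x e).2)⟩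
    exact ⟨mul_nonneg h1.1 h2.1, mul_le_one₀ h1.2 h2.1 h2.2⟩
  have hmeasf : Measurable f :=
    (Finset.measurable_prod _ fun e _ => measurable_indGt e).mul
      (Finset.measurable_prod _ fun e _ => measurable_indLe e)
  have hnormf : ∀ x, ‖f x‖ ≤ 1 := by
    intro x
    rw [Real.norm_eq_abs, abs_le]
    exact ⟨by linarith [(hfmem x).1], (hfmem x).2⟩
  -- structure of the pieces
  have hPpi : ∀ S : Finset V, P S = Set.univ.pi (fun v =>
      if v ∈ S then Set.Icc (1/2 - δ) (1/2:ℝ) else Set.Icc (1/2:ℝ) (1/2 + δ)) := by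
    intro S
    ext x
    simp only [hP, Set.mem_setOf_eq, Set.mem_univ_pi]
    constructor
    · rintro ⟨hJ, hS, hSc⟩ v
      by_cases hv : v ∈ S
      · simp only [hv, if_true]; exact ⟨(hJ v).1, hS v hv⟩
      · simp only [hv, if_false]; exact ⟨hSc v hv, (hJ v).2⟩
    · intro h
      refine ⟨fun v => ?_, fun u hu => ?_, fun u hu => ?_⟩
      · have := h v
        split_ifs at this with hv
        · exact ⟨this.1, by linarith [this.2]⟩
        · exact ⟨by linarith [this.1], this.2⟩
      · have := h u; rw [if_pos hu] at this; exact this.2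
      · have := h u; rw [if_neg hu] at this; exact this.1
  have hPmeas : ∀ S : Finset V, MeasurableSet (P S) := by
    intro S
    rw [hPpi S]
    exact MeasurableSet.univ_pi fun v => by split_ifs <;> exact measurableSet_Icc
  have hPfin : ∀ S : Finset V, volume (P S) ≠ ⊤ := by
    intro S
    rw [hPpi S, volume_pi_pi]
    refine (ENNReal.prod_lt_top fun v _ => ?_).ne
    split_ifs <;> simp [Real.volume_Icc]
  have hboxmeas : MeasurableSet box :=
    MeasurableSet.univ_pi fun v => measurableSet_Icc
  -- the null set of coordinates equal to 1/2
  have hN : ∀ᵐ x : V → ℝ, ∀ v : V, x v ≠ (1/2:ℝ) := by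
    rw [ae_all_iff]
    intro v
    rw [volume_pi]
    exact MeasureTheory.Measure.ae_eval_ne (fun _ : V => (volume : Measure ℝ)) v (1/2 : ℝ)
  -- the pointwise identity off the null set
  have hpt : ∀ x : V → ℝ, (∀ v : V, x v ≠ (1/2:ℝ)) →
      box.indicator f x = ∑ S ∈ nice, (P S).indicator f x := by
    intro x hx
    by_cases hxJ : ∀ v : V, x v ∈ Set.Icc (1/2 - δ) (1/2 + δ)
    · -- x lies in J^V
      have hxbox : x ∈ box := by
        rw [hbox, Set.mem_univ_pi]
        intro v
        exact ⟨by linarith [(hxJ v).1], (hxJ v).2⟩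
      set S₀ : Finset V := Finset.univ.filter (fun v => x v < 1/2) with hS₀def
      have hmem : ∀ S : Finset V, x ∈ P S ↔ S = S₀ := by
        intro S
        constructor
        · rintro ⟨hJ, hS, hSc⟩
          ext v
          simp only [hS₀def, Finset.mem_filter, Finset.mem_univ, true_and]
          constructor
          · intro hv; exact lt_of_le_of_ne (hS v hv) (hx v)
          · intro hv
            by_contra hvS
            exact absurd (hSc v hvS) (not_le.2 hv)
        · rintro rfl
          refine ⟨hxJ, fun u hu => ?_, fun u hu => ?_⟩
          · exact ((Finset.mem_filter.1 hu).2).le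
          · by_contra h
            exact hu (Finset.mem_filter.2 ⟨Finset.mem_univ u, not_le.1 h⟩)
      rw [Set.indicator_of_mem hxbox]
      by_cases hS₀nice : (∀ e ∈ T, ∃ u ∈ e, u ∉ S₀) ∧ (∀ e ∈ B, ∃ u ∈ e, u ∈ S₀)
      · rw [Finset.sum_eq_single_of_mem S₀
          (Finset.mem_filter.2 ⟨Finset.mem_univ _, hS₀nice⟩)
          (fun S _ hne => Set.indicator_of_notMem (fun hxP => hne ((hmem S).1 hxP)) f)]
        rw [Set.indicator_of_mem ((hmem S₀).2 rfl)]
      · have hz : ∑ S ∈ nice, (P S).indicator f x = 0 := by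
          refine Finset.sum_eq_zero fun S hS => ?_
          refine Set.indicator_of_notMem (fun hxP => ?_) f
          have : S = S₀ := (hmem S).1 hxP
          rw [this] at hS
          exact hS₀nice (Finset.mem_filter.1 hS).2
        rw [hz]
        rcases not_and_or.1 hS₀nice with h | h
        · push_neg at h
          obtain ⟨e, heT, hall⟩ := h
          refine mul_eq_zero_of_left (Finset.prod_eq_zero heT ?_) _
          induction e using Sym2.ind with
          | _ a b =>
            have ha : x a < 1/2 :=
              (Finset.mem_filter.1 (hall a (Sym2.mem_mk_left a b))).2
            have hb : x b < 1/2 :=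
              (Finset.mem_filter.1 (hall b (Sym2.mem_mk_right a b))).2
            rw [indGt_mk', if_neg (by linarith)]
        · push_neg at h
          obtain ⟨e, heB, hall⟩ := h
          refine mul_eq_zero_of_right _ (Finset.prod_eq_zero heB ?_)
          induction e using Sym2.ind with
          | _ a b =>
            have ha : ¬ x a < 1/2 := by
              have := hall a (Sym2.mem_mk_left a b)
              simp only [hS₀def, Finset.mem_filter, Finset.mem_univ, true_and] at this
              exact this
            have hb : ¬ x b < 1/2 := by
              have := hall b (Sym2.mem_mk_right a b)
              simp only [hS₀def, Finset.mem_filter, Finset.mem_univ, true_and] at this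
              exact this
            have ha' : 1/2 < x a := lt_of_le_of_ne (not_lt.1 ha) (Ne.symm (hx a))
            have hb' : 1/2 < x b := lt_of_le_of_ne (not_lt.1 hb) (Ne.symm (hx b))
            rw [indLe_mk', if_neg (by linarith)]
    · -- some coordinate of x is outside J
      push_neg at hxJ
      obtain ⟨v, hv⟩ := hxJ
      have hrhs : ∑ S ∈ nice, (P S).indicator f x = 0 := by
        refine Finset.sum_eq_zero fun S _ => ?_
        exact Set.indicator_of_notMem (fun hxP => hv (hxP.1 v)) f
      rw [hrhs]
      by_cases hxbox : x ∈ box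
      · rw [Set.indicator_of_mem hxbox]
        have hvbox : x v ∈ Set.Icc (0:ℝ) (1/2 + δ) := by
          rw [hbox, Set.mem_univ_pi] at hxbox
          exact hxbox v
        have hvlt : x v < 1/2 - δ := by
          rw [Set.mem_Icc, not_and_or] at hv
          rcases hv with h | h
          · exact not_le.1 h
          · exact absurd hvbox.2 h
        obtain ⟨e, heT, hve⟩ := hspan v
        refine mul_eq_zero_of_left (Finset.prod_eq_zero heT ?_) _
        induction e using Sym2.ind with
        | _ a b =>
          have hax : x a ≤ 1/2 + δ := by
            rw [hbox, Set.mem_univ_pi] at hxbox; exact (hxbox a).2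
          have hbx : x b ≤ 1/2 + δ := by
            rw [hbox, Set.mem_univ_pi] at hxbox; exact (hxbox b).2
          rcases Sym2.mem_iff.1 hve with rfl | rfl
          · rw [indGt_mk', if_neg (by linarith)]
          · rw [indGt_mk', if_neg (by linarith)]
      · rw [Set.indicator_of_notMem hxbox]
  -- integrability of the pieces
  have hint : ∀ S ∈ nice, Integrable (fun x => (P S).indicator f x) volume := by
    intro S _
    have : IntegrableOn f (P S) volume :=
      Measure.integrableOn_of_bounded (hPfin S) hmeasf.aestronglyMeasurable
        (ae_of_all _ fun x => hnormf x)
    exact this.integrable_indicator (hPmeas S)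
  calc ∫ x in box, f x = ∫ x, box.indicator f x := (integral_indicator hboxmeas).symm
    _ = ∫ x, ∑ S ∈ nice, (P S).indicator f x :=
        integral_congr_ae (hN.mono fun x hx => hpt x hx)
    _ = ∑ S ∈ nice, ∫ x, (P S).indicator f x := integral_finset_sum _ hint
    _ = ∑ S ∈ nice, ∫ x in P S, f x :=
        Finset.sum_congr rfl fun S _ => integral_indicator (hPmeas S)

end Statement14Aux

/-- With `f` as before, `J = [1/2−δ,1/2+δ]`, and for `S ⊆ V` the
piece `P_S = {x ∈ J^V : x_u ≤ 1/2 for u ∈ S, x_u ≥ 1/2 for u ∉ S}`, calling `S` nice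
when `S` is independent in `(V,T)` and `V∖S` is independent in `(V,E_T)`:
`∫_{[0,1/2+δ]^V} f dμ = ∑_{S nice} ∫_{P_S} f dμ`. -/
theorem statement14 (δ : ℝ) (hδ : δ ∈ Set.Ioo (0:ℝ) (1/2)) (V : Type) [Fintype V]
    (hcard : 2 ≤ Fintype.card V) (G : SimpleGraph V) (hconn : G.Connected)
    (ord : Sym2 V → ℕ) (hord : Function.Injective ord) (T : Finset (Sym2 V))
    (hTE : (↑T : Set (Sym2 V)) ⊆ G.edgeSet)
    (hT : (SimpleGraph.fromEdgeSet (↑T : Set (Sym2 V))).IsTree) :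
    (∫ x : V → ℝ in Set.univ.pi (fun _ => Set.Icc (0:ℝ) (1/2 + δ)),
        (∏ e ∈ T, indGt x e) * ∏ e ∈ brokenEdgesOn G ord Finset.univ T, indLe x e)
    = ∑ S ∈ Finset.univ.filter (fun S : Finset V =>
          (∀ e ∈ T, ∃ u ∈ e, u ∉ S) ∧
          (∀ e ∈ brokenEdgesOn G ord Finset.univ T, ∃ u ∈ e, u ∈ S)),
        ∫ x : V → ℝ in {y : V → ℝ | (∀ v, y v ∈ Set.Icc (1/2 - δ) (1/2 + δ)) ∧
            (∀ u ∈ S, y u ≤ 1/2) ∧ (∀ u ∉ S, 1/2 ≤ y u)},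
          (∏ e ∈ T, indGt x e) * ∏ e ∈ brokenEdgesOn G ord Finset.univ T, indLe x e := by
  classical
  have hspan : ∀ v : V, ∃ e ∈ T, v ∈ e := by
    intro v
    obtain ⟨u, hu⟩ := Fintype.exists_ne_of_one_lt_card (by omega) v
    obtain ⟨p⟩ := hT.isConnected.preconnected v u
    cases p with
    | nil => exact absurd rfl (Ne.symm hu)
    | cons h q =>
      rw [SimpleGraph.fromEdgeSet_adj] at h
      exact ⟨_, Finset.mem_coe.1 h.1, Sym2.mem_mk_left _ _⟩
  exact key14 δ hδ.1 hδ.2 T (brokenEdgesOn G ord Finset.univ T) hspan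

end VolumePaper
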